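/- For a finite non-empty sample space Ω, a closed non-empty subset 𝒬 of the probability measures on Ω, and any probability measure P on Ω, there exist Q ∈ 𝒬 and a probability measure R on Ω such that P = λ_𝒬(P)·Q + (1 − λ_𝒬(P))·R. -/
import Mathlib


open scoped BigOperators

/-- A function `P : Ω → ℝ` on a finite sample space is a probability measure if it is
nonnegative and sums to one. -/
def IsProb {Ω : Type*} [Fintype Ω] (P : Ω → ℝ) : Prop :=
  (∀ ω, 0 ≤ P ω) ∧ ∑ ω, P ω = 1

/-- The latent weight of the class `𝒬` in `P`:
`λ_𝒬(P) = sup { λ | P ≥ λ·Q for some Q ∈ 𝒬 }`. -/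
noncomputable def latentWeight {Ω : Type*} [Fintype Ω]
    (𝒬 : Set (Ω → ℝ)) (P : Ω → ℝ) : ℝ :=
  sSup {l : ℝ | ∃ Q ∈ 𝒬, ∀ ω, l * Q ω ≤ P ω}

/-- There exist `Q ∈ 𝒬` and a probability measure `R` on `Ω` with
`P = λ_𝒬(P)·Q + (1 − λ_𝒬(P))·R`. -/
theorem stmt2 {Ω : Type*} [Fintype Ω] [Nonempty Ω]
    (𝒬 : Set (Ω → ℝ)) (h𝒬prob : ∀ Q ∈ 𝒬, IsProb Q)
    (h𝒬closed : IsClosed 𝒬) (h𝒬ne : 𝒬.Nonempty)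
    (P : Ω → ℝ) (hP : IsProb P) :
    ∃ Q ∈ 𝒬, ∃ R : Ω → ℝ, IsProb R ∧
      ∀ ω, P ω = latentWeight 𝒬 P * Q ω + (1 - latentWeight 𝒬 P) * R ω := by
  classical
  obtain ⟨Q0, hQ0⟩ := h𝒬ne
  -- 𝒬 is compact
  have h𝒬sub : 𝒬 ⊆ Set.Icc (0 : Ω → ℝ) 1 := by
    intro Q hQ
    constructor
    · intro ω; exact (h𝒬prob Q hQ).1 ω
    · intro ω
      calc Q ω ≤ ∑ ω', Q ω' :=
            Finset.single_le_sum (fun i _ => (h𝒬prob Q hQ).1 i) (Finset.mem_univ ω)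
        _ = 1 := (h𝒬prob Q hQ).2
  have hcomp𝒬 : IsCompact 𝒬 := (isCompact_Icc).of_isClosed_subset h𝒬closed h𝒬sub
  -- the compact feasible set A
  set A : Set (ℝ × (Ω → ℝ)) :=
    (Set.Icc (0:ℝ) 1 ×ˢ 𝒬) ∩ {p | ∀ ω, p.1 * p.2 ω ≤ P ω} with hA
  have hclosedA : IsClosed {p : ℝ × (Ω → ℝ) | ∀ ω, p.1 * p.2 ω ≤ P ω} := by
    have h : {p : ℝ × (Ω → ℝ) | ∀ ω, p.1 * p.2 ω ≤ P ω}
        = ⋂ ω, {p : ℝ × (Ω → ℝ) | p.1 * p.2 ω ≤ P ω} := by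
      ext p; simp
    rw [h]
    exact isClosed_iInter fun ω =>
      isClosed_le (continuous_fst.mul ((continuous_apply ω).comp continuous_snd))
        continuous_const
  have hcompA : IsCompact A :=
    ((isCompact_Icc.prod hcomp𝒬).inter_right hclosedA)
  have hAne : A.Nonempty := by
    refine ⟨(0, Q0), ⟨⟨le_refl _, zero_le_one⟩, hQ0⟩, ?_⟩
    intro ω; simpa using hP.1 ω
  obtain ⟨p, hpA, hmax⟩ := hcompA.exists_isMaxOn hAne continuous_fst.continuousOn
  obtain ⟨⟨hp01, hpQ⟩, hpdom⟩ := hpA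
  -- every element of S is ≤ p.1
  have hbound : ∀ l ∈ {l : ℝ | ∃ Q ∈ 𝒬, ∀ ω, l * Q ω ≤ P ω}, l ≤ p.1 := by
    rintro l ⟨Q, hQ, hlQ⟩
    rcases le_or_gt l 0 with hl | hl
    · exact hl.trans hp01.1
    · have hl1 : l ≤ 1 := by
        have hs : ∑ ω, l * Q ω ≤ ∑ ω, P ω :=
          Finset.sum_le_sum fun ω _ => hlQ ω
        rwa [← Finset.mul_sum, (h𝒬prob Q hQ).2, hP.2, mul_one] at hs
      have hmemA : (l, Q) ∈ A := by
        refine Set.mem_inter ?_ hlQ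
        exact Set.mem_prod.mpr ⟨Set.mem_Icc.mpr ⟨hl.le, hl1⟩, hQ⟩
      exact hmax hmemA
  have hmem : p.1 ∈ {l : ℝ | ∃ Q ∈ 𝒬, ∀ ω, l * Q ω ≤ P ω} := ⟨p.2, hpQ, hpdom⟩
  have hlw : latentWeight 𝒬 P = p.1 :=
    le_antisymm (csSup_le ⟨p.1, hmem⟩ hbound) (le_csSup ⟨p.1, hbound⟩ hmem)
  rw [hlw]
  rcases eq_or_lt_of_le hp01.2 with heq | hlt
  · -- p.1 = 1 : then P = p.2
    have hsum0 : ∑ ω, (P ω - p.2 ω) = 0 := by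
      rw [Finset.sum_sub_distrib, hP.2, (h𝒬prob p.2 hpQ).2, sub_self]
    have hPeq : ∀ ω, P ω = p.2 ω := by
      intro ω
      have hnn : ∀ i ∈ Finset.univ, 0 ≤ P i - p.2 i := by
        intro i _
        have h1 := hpdom i
        rw [heq] at h1
        linarith
      have h2 := (Finset.sum_eq_zero_iff_of_nonneg hnn).mp hsum0 ω (Finset.mem_univ ω)
      linarith
    refine ⟨p.2, hpQ, P, hP, ?_⟩
    intro ω
    rw [heq, hPeq ω]
    ring
  · -- p.1 < 1
    refine ⟨p.2, hpQ, fun ω => (P ω - p.1 * p.2 ω) / (1 - p.1), ?_, ?_⟩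
    · constructor
      · intro ω
        apply div_nonneg _ (by linarith)
        linarith [hpdom ω]
      · rw [← Finset.sum_div, Finset.sum_sub_distrib, hP.2, ← Finset.mul_sum,
          (h𝒬prob p.2 hpQ).2, mul_one]
        exact div_self (by linarith)
    · intro ω
      have h10 : (1:ℝ) - p.1 ≠ 0 := by linarith
      rw [mul_comm (1 - p.1), div_mul_cancel₀ _ h10]
      ring
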